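/- Let k be a positive integer with gcd(q,k) = 1, let ζ_k be a primitive k-th root of unity in an extension field of Fq, let β be a nonzero proper element of F_{q^n}, and let m be the degree of the minimal polynomial of β^k over Fq. Then the elements ζ_k^{j} β^{q^{i}} for 1 ≤ j ≤ k and 0 ≤ i ≤ m − 1 are pairwise distinct. -/
import Mathlib

open Polynomial

lemma stmt16_aux {F E : Type*} [Field F] [Fintype F] [Field E] [Algebra F E]
    (x : E) (hx : IsIntegral F x) {i i' : ℕ}
    (hi : i < (minpoly F x).natDegree) (hi' : i' < (minpoly F x).natDegree)
    (h : x ^ Fintype.card F ^ i = x ^ Fintype.card F ^ i') : i = i' := by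
  classical
  wlog hle : i ≤ i' generalizing i i'
  · exact (this hi' hi h.symm (le_of_not_ge hle)).symm
  by_contra hne
  set q := Fintype.card F with hqdef
  set p := ringChar F with hpdef
  haveI hF : CharP F p := ringChar.charP F
  haveI hp : Fact p.Prime := ⟨CharP.char_is_prime F p⟩
  haveI hE : CharP E p := charP_of_injective_algebraMap (algebraMap F E).injective p
  obtain ⟨s, hp', hs⟩ := FiniteField.card F p
  have hq1 : 1 < q := Fintype.one_lt_card
  set d := i' - i with hddef
  have hd1 : 1 ≤ d := by omega
  have hdm : d < (minpoly F x).natDegree := by omega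
  -- step 1 : x ^ q ^ d = x
  have hxd : x ^ q ^ d = x := by
    have h2 : (x ^ q ^ d) ^ q ^ i = x ^ q ^ i := by
      rw [← pow_mul, ← pow_add, show d + i = i' by omega, ← h]
    have h3 : (x ^ q ^ d - x) ^ q ^ i = 0 := by
      have he : q ^ i = p ^ ((s : ℕ) * i) := by rw [hqdef, hs, ← pow_mul]
      rw [he, sub_pow_char_pow, ← he, h2, sub_self]
    have h4 := pow_eq_zero_iff (n := q ^ i) (by positivity) |>.mp h3
    exact sub_eq_zero.mp h4
  -- step 2 : every element of adjoin F {x} satisfies y ^ q ^ d = y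
  have hall : ∀ y ∈ Algebra.adjoin F ({x} : Set E), y ^ q ^ d = y := by
    intro y hy
    have hpow : ∀ a b : E, a ^ q ^ d = a → b ^ q ^ d = b → (a + b) ^ q ^ d = a + b := by
      intro a b ha hb
      have he : q ^ d = p ^ ((s : ℕ) * d) := by rw [hqdef, hs, ← pow_mul]
      rw [he, add_pow_char_pow, ← he, ha, hb]
    induction hy using Algebra.adjoin_induction with
    | mem z hz => rw [Set.mem_singleton_iff.mp hz]; exact hxd
    | algebraMap a => rw [← map_pow, FiniteField.pow_card_pow]
    | add a b _ _ ha hb => exact hpow a b ha hb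
    | mul a b _ _ ha hb => rw [mul_pow, ha, hb]
  -- step 3: counting
  haveI : Fintype (Algebra.adjoin F ({x} : Set E)) :=
    Module.fintypeOfFintype (Algebra.adjoin.powerBasis hx).basis
  have hcard : Fintype.card (Algebra.adjoin F ({x} : Set E)) = q ^ (minpoly F x).natDegree := by
    rw [Module.card_fintype (Algebra.adjoin.powerBasis hx).basis, Fintype.card_fin,
      Algebra.adjoin.powerBasis_dim, hqdef]
  set P : E[X] := X ^ q ^ d - X with hPdef
  have hP : P.natDegree = q ^ d :=
    FiniteField.X_pow_card_sub_X_natDegree_eq E (Nat.one_lt_pow (by omega) hq1)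
  set Z : Finset E := Finset.univ.image
      (fun y : Algebra.adjoin F ({x} : Set E) => (y : E)) with hZdef
  have hZcard : Z.card = q ^ (minpoly F x).natDegree := by
    rw [hZdef, Finset.card_image_of_injective _ Subtype.val_injective, Finset.card_univ, hcard]
  have hsub : Z.val ⊆ P.roots := by
    intro z hz
    simp only [hZdef, Finset.image_val, Multiset.mem_dedup, Multiset.mem_map] at hz
    obtain ⟨y, _, rfl⟩ := hz
    rw [mem_roots']
    constructor
    · exact FiniteField.X_pow_card_sub_X_ne_zero E (Nat.one_lt_pow (by omega) hq1)
    · have := hall y y.2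
      simp [hPdef, IsRoot, this]
  have hle2 : q ^ (minpoly F x).natDegree ≤ q ^ d := by
    rw [← hZcard, ← hP]
    exact Polynomial.card_le_degree_of_subset_roots hsub
  have : q ^ d < q ^ (minpoly F x).natDegree := Nat.pow_lt_pow_right hq1 hdm
  omega

/-- Let `k ≥ 1` with `gcd(q,k) = 1`, `ζ_k` a primitive `k`-th root of
unity in an extension field of `F_q`, `β` a nonzero proper element of `F_{q^n}`, and `m` the
degree of the minimal polynomial of `β^k` over `F_q`. Then the elements `ζ_k^j β^{q^i}` for
`1 ≤ j ≤ k` and `0 ≤ i ≤ m − 1` are pairwise distinct. -/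
theorem stmt16 {F E : Type*} [Field F] [Fintype F] [Field E] [Algebra F E]
    (n : ℕ) (hn : 0 < n)
    (β : E) (hβ0 : β ≠ 0) (hproper : (minpoly F β).natDegree = n)
    (k : ℕ) (hk : 0 < k) (hgcd : Nat.gcd (Fintype.card F) k = 1)
    (ζ : E) (hζ : IsPrimitiveRoot ζ k)
    (m : ℕ) (hm : m = (minpoly F (β ^ k)).natDegree) :
    ∀ j i j' i' : ℕ, 1 ≤ j → j ≤ k → 1 ≤ j' → j' ≤ k → i ≤ m - 1 → i' ≤ m - 1 →
      ζ ^ j * β ^ Fintype.card F ^ i = ζ ^ j' * β ^ Fintype.card F ^ i' →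
      j = j' ∧ i = i' := by
  intro j i j' i' hj1 hjk hj'1 hj'k hi hi' heq
  set q := Fintype.card F with hqdef
  have hβint : IsIntegral F β := by
    by_contra hc
    rw [minpoly.eq_zero hc] at hproper
    simp at hproper
    omega
  have hxint : IsIntegral F (β ^ k) := hβint.pow k
  have hm1 : 1 ≤ m := by rw [hm]; exact minpoly.natDegree_pos hxint
  have him : i < m := by omega
  have hi'm : i' < m := by omega
  -- raise to the k-th power to kill the roots of unity
  have heqk : (β ^ k) ^ q ^ i = (β ^ k) ^ q ^ i' := by
    have h1 := congrArg (· ^ k) heq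
    simp only [mul_pow] at h1
    rw [← pow_mul ζ j k, mul_comm j k, pow_mul, hζ.pow_eq_one, one_pow, one_mul,
        ← pow_mul ζ j' k, mul_comm j' k, pow_mul, hζ.pow_eq_one, one_pow, one_mul] at h1
    rw [pow_right_comm β k (q ^ i), pow_right_comm β k (q ^ i')]
    exact h1
  have hii' : i = i' := by
    apply stmt16_aux (β ^ k) hxint (i := i) (i' := i')
    · rw [← hm]; exact him
    · rw [← hm]; exact hi'm
    · exact heqk
  subst hii'
  refine ⟨?_, rfl⟩
  have hbne : β ^ q ^ i ≠ 0 := pow_ne_zero _ hβ0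
  have hzeta : ζ ^ j = ζ ^ j' := mul_right_cancel₀ hbne heq
  have hmod : ∀ t : ℕ, ζ ^ t = ζ ^ (t % k) := by
    intro t
    conv_lhs => rw [← Nat.div_add_mod t k]
    rw [pow_add, pow_mul, hζ.pow_eq_one, one_pow, one_mul]
  have hmodeq : j % k = j' % k := by
    apply hζ.pow_inj (Nat.mod_lt _ hk) (Nat.mod_lt _ hk)
    rw [← hmod, ← hmod]; exact hzeta
  have key : ∀ t, 1 ≤ t → t ≤ k → (t % k = t ∧ t < k) ∨ (t = k ∧ t % k = 0) := by
    intro t h1 h2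
    rcases eq_or_lt_of_le h2 with rfl | hlt
    · exact Or.inr ⟨rfl, Nat.mod_self t⟩
    · exact Or.inl ⟨Nat.mod_eq_of_lt hlt, hlt⟩
  rcases key j hj1 hjk with ⟨e1, l1⟩ | ⟨e1, e2⟩ <;>
    rcases key j' hj'1 hj'k with ⟨f1, l2⟩ | ⟨f1, f2⟩
  · rw [← e1, hmodeq, f1]
  · rw [e1, f2] at hmodeq; omega
  · rw [e2, f1] at hmodeq; omega
  · rw [e1, f1]
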